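/- Let R be a unital non-associative ring, G a monoid, π a G-derivation on R, and S = R[G;π] the Ore monoid ring. Define Z(S)^G = {s ∈ Z(S) : for all a,b ∈ G, π̃^a_b(s) = s if a = b and π̃^a_b(s) = 0 otherwise}. If S is G-simple and for all a,b ∈ G the extended map π̃^a_b is right Z(S)^G-linear (or, for all a,b ∈ G, π̃^a_b is left Z(S)^G-linear), then Z(S)^G is a field, i.e. a commutative unital ring in which every nonzero element has a multiplicative inverse. -/

import Mathlib

open scoped Classical

/-! Common framework: Ore monoid rings `R[G;π]` over a unital non-associative ring `R`
and a monoid `G`.  A `G`-derivation `π = {π^a_b}` is encoded as a map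
`π : G → R → (G →₀ R)`, where `π a r b = π^a_b(r)`; axiom (D0) (finite support in `b`)
is built into the `Finsupp` encoding.  The Ore monoid ring `S = R[G;π]` is the
additive group `G →₀ R` of finitely supported formal sums `Σ r_a xᵃ`
(with `Finsupp.single a r` representing `r xᵃ`), equipped with the
multiplication `GDeriv.mul` below. -/

/-- A two-sided ideal with respect to a (possibly non-associative, non-unital)
multiplication `m` on an additive group `A`. -/
structure IsIdealWith {A : Type*} [AddCommGroup A] (m : A → A → A) (J : Set A) : Prop where
  zero_mem : (0 : A) ∈ J
  add_mem : ∀ {x y : A}, x ∈ J → y ∈ J → x + y ∈ J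
  neg_mem : ∀ {x : A}, x ∈ J → -x ∈ J
  mul_mem_left : ∀ (r : A) {x : A}, x ∈ J → m r x ∈ J
  mul_mem_right : ∀ {x : A} (r : A), x ∈ J → m x r ∈ J

/-- The subset `F` of `A` is a field with respect to the multiplication `m` with
identity `one`: it is a commutative unital subring in which every nonzero element
has a multiplicative inverse. -/
def IsFieldWith {A : Type*} [AddCommGroup A] (m : A → A → A) (one : A) (F : Set A) : Prop :=
  one ∈ F ∧ (∀ x ∈ F, ∀ y ∈ F, x + y ∈ F) ∧ (∀ x ∈ F, -x ∈ F) ∧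
  (∀ x ∈ F, ∀ y ∈ F, m x y ∈ F) ∧ (∀ x ∈ F, ∀ y ∈ F, m x y = m y x) ∧
  (∀ x ∈ F, x ≠ 0 → ∃ y ∈ F, m x y = one ∧ m y x = one)

/-- A `G`-derivation on `R`: axioms (D0)–(D4).  Here `π a r b` denotes `π^a_b(r)`,
and (D0) holds by the finite support of `π a r : G →₀ R`. -/
structure GDeriv (R : Type*) [NonAssocRing R] (G : Type*) [Monoid G] where
  /-- the family of maps; `π a r b = π^a_b(r)` -/
  π : G → R → (G →₀ R)
  /-- (D1): `π^e_e = id` and `π^e_a = 0` for `a ≠ e` -/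
  d1 : ∀ r : R, π 1 r = Finsupp.single 1 r
  /-- (D2): `π^a_b(1) = δ_{a,b}` -/
  d2 : ∀ a : G, π a (1 : R) = Finsupp.single a (1 : R)
  /-- (D3): each `π^a_b` is additive -/
  d3 : ∀ (a : G) (r s : R), π a (r + s) = π a r + π a s
  /-- (D4): `π^{ab}_c = Σ_{df = c} π^a_d ∘ π^b_f` -/
  d4 : ∀ (a b : G) (r : R),
    π (a * b) r = (π b r).sum fun f s => (π a s).sum fun d t => Finsupp.single (d * f) t

namespace GDeriv

variable {R : Type*} [NonAssocRing R] {G : Type*} [Monoid G] (P : GDeriv R G)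

/-- The multiplication of the Ore monoid ring `S = R[G;π]` on `G →₀ R`:
the biadditive extension of `(r xᵃ)(s xᵇ) = Σ_c r π^a_c(s) x^{cb}`. -/
noncomputable def mul (u v : G →₀ R) : G →₀ R :=
  u.sum fun a r => v.sum fun b s => (P.π a s).sum fun c t => Finsupp.single (c * b) (r * t)

/-- The multiplicative identity `1·xᵉ` of `S`. -/
noncomputable def one (_P : GDeriv R G) : G →₀ R := Finsupp.single 1 1

/-- `R^G = {r ∈ R : π^a_b(r) = δ_{a,b} r}`. -/
def fixed : Set R := {r | ∀ a : G, P.π a r = Finsupp.single a r}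

/-- `S^G = Σ_a R^G xᵃ`, the elements of `S` all of whose coefficients lie in `R^G`. -/
def fixedS : Set (G →₀ R) := {u | ∀ c : G, u c ∈ P.fixed}

/-- (D7): every `π^a_b` is left `R^G`-linear. -/
def LeftLinear : Prop := ∀ a b : G, ∀ s ∈ P.fixed, ∀ r : R, P.π a (s * r) b = s * P.π a r b

/-- (D8): every `π^a_b` is right `R^G`-linear. -/
def RightLinear : Prop := ∀ a b : G, ∀ r : R, ∀ s ∈ P.fixed, P.π a (r * s) b = P.π a r b * s

/-- `π` is strong if (D7) or (D8) holds. -/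
def Strong : Prop := P.LeftLinear ∨ P.RightLinear

/-- (D6): `π^a_a = id_R` for all `a ∈ G` (i.e. `π` is unital). -/
def Unital : Prop := ∀ (a : G) (r : R), P.π a r a = r

/-- `π` is commutative: `π^a_b ∘ π^c_d = π^c_d ∘ π^a_b`. -/
def Commutes : Prop := ∀ (a b c d : G) (r : R), P.π a (P.π c r d) b = P.π c (P.π a r b) d

/-- `π` is well-ordered: there is a well-order on `G` whose strict part `lt`
satisfies `π^a_b = 0` whenever `a ≺ b`. -/
def WellOrdered : Prop :=
  ∃ lt : G → G → Prop, IsWellOrder G lt ∧ ∀ a b : G, lt a b → ∀ r : R, P.π a r b = 0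

/-- The extension `π̃^a_b : S → S`, `π̃^a_b(Σ_c r_c x^c) = Σ_c π^a_b(r_c) x^c`. -/
noncomputable def ext (a b : G) (u : G →₀ R) : G →₀ R := u.sum fun c r => Finsupp.single c (P.π a r b)

/-- The commutator `[u,v] = uv - vu` in `S`. -/
noncomputable def commS (u v : G →₀ R) : G →₀ R := P.mul u v - P.mul v u

/-- The associator `(u,v,w) = (uv)w - u(vw)` in `S`. -/
noncomputable def assocS (u v w : G →₀ R) : G →₀ R := P.mul (P.mul u v) w - P.mul u (P.mul v w)

/-- The left nucleus `N_l(S)`. -/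
def Nl : Set (G →₀ R) := {u | ∀ v w, P.assocS u v w = 0}

/-- The middle nucleus `N_m(S)`. -/
def Nm : Set (G →₀ R) := {u | ∀ v w, P.assocS v u w = 0}

/-- The right nucleus `N_r(S)`. -/
def Nr : Set (G →₀ R) := {u | ∀ v w, P.assocS v w u = 0}

/-- The commuter `C(S)`. -/
def CS : Set (G →₀ R) := {u | ∀ v, P.mul u v = P.mul v u}

/-- The center `Z(S) = C(S) ∩ N_l(S) ∩ N_m(S) ∩ N_r(S)`. -/
def Z : Set (G →₀ R) := P.CS ∩ (P.Nl ∩ P.Nm ∩ P.Nr)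

/-- `Z(S)^G = {s ∈ Z(S) : π̃^a_b(s) = δ_{a,b} s}`. -/
def ZG : Set (G →₀ R) :=
  {s | s ∈ P.Z ∧ ∀ a b : G, P.ext a b s = if a = b then s else 0}

/-- `R` is `G`-simple: `{0}` and `R` are the only `G`-invariant ideals of `R`. -/
def RSimple : Prop :=
  ∀ J : Set R, IsIdealWith (· * ·) J → (∀ a b : G, ∀ r ∈ J, P.π a r b ∈ J) →
    J = {0} ∨ J = Set.univ

/-- `S` is `G`-simple: `{0}` and `S` are the only ideals of `S` invariant under all `π̃^a_b`. -/
def SSimple : Prop :=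
  ∀ J : Set (G →₀ R), IsIdealWith P.mul J → (∀ a b : G, ∀ u ∈ J, P.ext a b u ∈ J) →
    J = {0} ∨ J = Set.univ

end GDeriv

namespace GDeriv

variable {R : Type*} [NonAssocRing R] {G : Type*} [Monoid G] (P : GDeriv R G)

lemma pi_zero (a : G) : P.π a 0 = 0 := by
  have h := P.d3 a 0 0
  rw [add_zero] at h
  exact (left_eq_add.mp h)

lemma zero_mul' (v : G →₀ R) : P.mul 0 v = 0 := by
  simp [GDeriv.mul]

lemma mul_zero' (u : G →₀ R) : P.mul u 0 = 0 := by
  simp [GDeriv.mul]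

lemma add_mul' (u v w : G →₀ R) : P.mul (u + v) w = P.mul u w + P.mul v w := by
  unfold GDeriv.mul
  refine Finsupp.sum_add_index' (fun a => ?_) (fun a r₁ r₂ => ?_)
  · simp
  · rw [← Finsupp.sum_add]
    refine Finsupp.sum_congr fun b _ => ?_
    rw [← Finsupp.sum_add]
    refine Finsupp.sum_congr fun c _ => ?_
    rw [add_mul, Finsupp.single_add]

lemma mul_add' (u v w : G →₀ R) : P.mul u (v + w) = P.mul u v + P.mul u w := by
  unfold GDeriv.mul
  rw [← Finsupp.sum_add]
  refine Finsupp.sum_congr fun a _ => ?_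
  refine Finsupp.sum_add_index' (fun b => ?_) (fun b s₁ s₂ => ?_)
  · rw [P.pi_zero]; simp
  · rw [P.d3]
    refine Finsupp.sum_add_index' (fun c => ?_) (fun c t₁ t₂ => ?_)
    · simp
    · rw [mul_add, Finsupp.single_add]

lemma mul_neg' (u v : G →₀ R) : P.mul u (-v) = -(P.mul u v) := by
  have h : P.mul u v + P.mul u (-v) = 0 := by
    rw [← P.mul_add', add_neg_cancel, P.mul_zero']
  exact eq_neg_of_add_eq_zero_right h

lemma neg_mul' (u v : G →₀ R) : P.mul (-u) v = -(P.mul u v) := by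
  have h : P.mul u v + P.mul (-u) v = 0 := by
    rw [← P.add_mul', add_neg_cancel, P.zero_mul']
  exact eq_neg_of_add_eq_zero_right h

lemma mul_sub' (u v w : G →₀ R) : P.mul u (v - w) = P.mul u v - P.mul u w := by
  rw [sub_eq_add_neg, P.mul_add', P.mul_neg', sub_eq_add_neg]

lemma sub_mul' (u v w : G →₀ R) : P.mul (u - v) w = P.mul u w - P.mul v w := by
  rw [sub_eq_add_neg, P.add_mul', P.neg_mul', sub_eq_add_neg]

lemma one_mul' (u : G →₀ R) : P.mul P.one u = u := by
  unfold GDeriv.mul GDeriv.one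
  rw [Finsupp.sum_single_index (by simp)]
  calc u.sum (fun b s => (P.π 1 s).sum fun c t => Finsupp.single (c * b) ((1:R) * t))
      = u.sum fun b s => Finsupp.single b s := by
        refine Finsupp.sum_congr fun b _ => ?_
        rw [P.d1, Finsupp.sum_single_index (by simp), one_mul, one_mul]
    _ = u := Finsupp.sum_single u

lemma mul_one' (u : G →₀ R) : P.mul u P.one = u := by
  unfold GDeriv.mul GDeriv.one
  calc u.sum (fun a r => (Finsupp.single (1:G) (1:R)).sum fun b s =>
        (P.π a s).sum fun c t => Finsupp.single (c * b) (r * t))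
      = u.sum fun a r => Finsupp.single a r := by
        refine Finsupp.sum_congr fun a _ => ?_
        rw [Finsupp.sum_single_index (by rw [P.pi_zero]; simp), P.d2,
          Finsupp.sum_single_index (by simp), mul_one, mul_one]
    _ = u := Finsupp.sum_single u

lemma ext_zero (a b : G) : P.ext a b 0 = 0 := by simp [GDeriv.ext]

lemma ext_add (a b : G) (u v : G →₀ R) :
    P.ext a b (u + v) = P.ext a b u + P.ext a b v := by
  unfold GDeriv.ext
  exact Finsupp.sum_add_index' (fun c => by rw [P.pi_zero]; simp)
    (fun c r s => by rw [P.d3, Finsupp.add_apply, Finsupp.single_add])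

lemma ext_neg (a b : G) (u : G →₀ R) : P.ext a b (-u) = -(P.ext a b u) := by
  have h : P.ext a b u + P.ext a b (-u) = 0 := by
    rw [← P.ext_add, add_neg_cancel, P.ext_zero]
  exact eq_neg_of_add_eq_zero_right h

lemma ext_sub (a b : G) (u v : G →₀ R) :
    P.ext a b (u - v) = P.ext a b u - P.ext a b v := by
  rw [sub_eq_add_neg, P.ext_add, P.ext_neg, sub_eq_add_neg]

lemma ext_one (a b : G) : P.ext a b P.one = if a = b then P.one else 0 := by
  unfold GDeriv.ext GDeriv.one
  rw [Finsupp.sum_single_index (by rw [P.pi_zero]; simp), P.d2, Finsupp.single_apply]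
  split <;> simp

lemma nl_mul {u : G →₀ R} (h : u ∈ P.Nl) (v w : G →₀ R) :
    P.mul (P.mul u v) w = P.mul u (P.mul v w) := sub_eq_zero.mp (h v w)

lemma nm_mul {u : G →₀ R} (h : u ∈ P.Nm) (v w : G →₀ R) :
    P.mul (P.mul v u) w = P.mul v (P.mul u w) := sub_eq_zero.mp (h v w)

lemma nr_mul {u : G →₀ R} (h : u ∈ P.Nr) (v w : G →₀ R) :
    P.mul (P.mul v w) u = P.mul v (P.mul w u) := sub_eq_zero.mp (h v w)

lemma mem_Nl {u : G →₀ R}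
    (h : ∀ v w, P.mul (P.mul u v) w = P.mul u (P.mul v w)) : u ∈ P.Nl :=
  fun v w => sub_eq_zero.mpr (h v w)

lemma mem_Nm {u : G →₀ R}
    (h : ∀ v w, P.mul (P.mul v u) w = P.mul v (P.mul u w)) : u ∈ P.Nm :=
  fun v w => sub_eq_zero.mpr (h v w)

lemma mem_Nr {u : G →₀ R}
    (h : ∀ v w, P.mul (P.mul v w) u = P.mul v (P.mul w u)) : u ∈ P.Nr :=
  fun v w => sub_eq_zero.mpr (h v w)

lemma one_mem_Z : P.one ∈ P.Z :=
  ⟨fun v => by rw [P.one_mul', P.mul_one'],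
    ⟨P.mem_Nl fun v w => by rw [P.one_mul', P.one_mul'],
      P.mem_Nm fun v w => by rw [P.mul_one', P.one_mul']⟩,
    P.mem_Nr fun v w => by rw [P.mul_one', P.mul_one']⟩

end GDeriv

/-- If `S` is `G`-simple and every extended map `π̃^a_b` is right
`Z(S)^G`-linear (or every `π̃^a_b` is left `Z(S)^G`-linear), then `Z(S)^G` is a
field. -/
theorem stmt9 {R : Type*} [NonAssocRing R] {G : Type*} [Monoid G]
    (P : GDeriv R G) (h : P.SSimple)
    (hlin :
      (∀ a b : G, ∀ u : G →₀ R, ∀ v ∈ P.ZG,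
        P.ext a b (P.mul u v) = P.mul (P.ext a b u) v) ∨
      (∀ a b : G, ∀ v ∈ P.ZG, ∀ u : G →₀ R,
        P.ext a b (P.mul v u) = P.mul v (P.ext a b u))) :
    IsFieldWith P.mul P.one P.ZG := by
  classical
  have hz1all : ∀ z ∈ P.Z, ∀ v, P.mul z v = P.mul v z := fun z hz => hz.1
  have honeZG : P.one ∈ P.ZG := ⟨P.one_mem_Z, fun a b => P.ext_one a b⟩
  refine ⟨honeZG, ?_, ?_, ?_, ?_, ?_⟩
  · -- addition
    intro x hx y hy
    obtain ⟨⟨hx1, ⟨hx2, hx3⟩, hx4⟩, hx5⟩ := hx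
    obtain ⟨⟨hy1, ⟨hy2, hy3⟩, hy4⟩, hy5⟩ := hy
    refine ⟨⟨fun v => ?_, ⟨P.mem_Nl fun v w => ?_, P.mem_Nm fun v w => ?_⟩,
      P.mem_Nr fun v w => ?_⟩, fun a b => ?_⟩
    · simp only [P.add_mul', P.mul_add', hx1 v, hy1 v]
    · simp only [P.add_mul', P.mul_add', P.nl_mul hx2, P.nl_mul hy2]
    · simp only [P.mul_add', P.add_mul', P.nm_mul hx3, P.nm_mul hy3]
    · simp only [P.mul_add', P.nr_mul hx4, P.nr_mul hy4]
    · rw [P.ext_add, hx5 a b, hy5 a b]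
      split_ifs <;> simp
  · -- negation
    intro x hx
    obtain ⟨⟨hx1, ⟨hx2, hx3⟩, hx4⟩, hx5⟩ := hx
    refine ⟨⟨fun v => ?_, ⟨P.mem_Nl fun v w => ?_, P.mem_Nm fun v w => ?_⟩,
      P.mem_Nr fun v w => ?_⟩, fun a b => ?_⟩
    · simp only [P.neg_mul', P.mul_neg', hx1 v]
    · simp only [P.neg_mul', P.mul_neg', P.nl_mul hx2]
    · simp only [P.neg_mul', P.mul_neg', P.nm_mul hx3]
    · simp only [P.neg_mul', P.mul_neg', P.nr_mul hx4]
    · rw [P.ext_neg, hx5 a b]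
      split_ifs <;> simp
  · -- multiplication
    intro x hx y hy
    have hx1 := hx.1.1; have hx2 := hx.1.2.1.1; have hx3 := hx.1.2.1.2
    have hx4 := hx.1.2.2; have hx5 := hx.2
    have hy1 := hy.1.1; have hy2 := hy.1.2.1.1; have hy3 := hy.1.2.1.2
    have hy4 := hy.1.2.2; have hy5 := hy.2
    refine ⟨⟨fun v => ?_, ⟨P.mem_Nl fun u v => ?_, P.mem_Nm fun u v => ?_⟩,
      P.mem_Nr fun u v => ?_⟩, fun a b => ?_⟩
    · calc P.mul (P.mul x y) v = P.mul x (P.mul y v) := P.nl_mul hx2 y v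
        _ = P.mul x (P.mul v y) := by rw [hy1 v]
        _ = P.mul (P.mul x v) y := (P.nl_mul hx2 v y).symm
        _ = P.mul (P.mul v x) y := by rw [hx1 v]
        _ = P.mul v (P.mul x y) := P.nm_mul hx3 v y
    · calc P.mul (P.mul (P.mul x y) u) v
          = P.mul (P.mul x (P.mul y u)) v := by rw [P.nl_mul hx2 y u]
        _ = P.mul x (P.mul (P.mul y u) v) := P.nl_mul hx2 _ v
        _ = P.mul x (P.mul y (P.mul u v)) := by rw [P.nl_mul hy2 u v]
        _ = P.mul (P.mul x y) (P.mul u v) := (P.nl_mul hx2 y _).symm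
    · calc P.mul (P.mul u (P.mul x y)) v
          = P.mul (P.mul (P.mul u x) y) v := by rw [P.nm_mul hx3 u y]
        _ = P.mul (P.mul u x) (P.mul y v) := P.nm_mul hy3 _ v
        _ = P.mul u (P.mul x (P.mul y v)) := P.nm_mul hx3 u _
        _ = P.mul u (P.mul (P.mul x y) v) := by rw [P.nl_mul hx2 y v]
    · calc P.mul (P.mul u v) (P.mul x y)
          = P.mul (P.mul (P.mul u v) x) y := (P.nm_mul hx3 _ y).symm
        _ = P.mul (P.mul u (P.mul v x)) y := by rw [P.nr_mul hx4 u v]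
        _ = P.mul u (P.mul (P.mul v x) y) := P.nr_mul hy4 u _
        _ = P.mul u (P.mul v (P.mul x y)) := by rw [P.nm_mul hx3 v y]
    · rcases hlin with hR | hL
      · rw [hR a b x y hy, hx5 a b]
        split_ifs with hab
        · rfl
        · exact P.zero_mul' y
      · rw [hL a b x hx y, hy5 a b]
        split_ifs with hab
        · rfl
        · exact P.mul_zero' x
  · -- commutativity
    exact fun x hx y _ => hx.1.1 y
  · -- inverses
    intro z hz hz0
    have hz1 : ∀ v, P.mul z v = P.mul v z := hz.1.1
    have hz2 := hz.1.2.1.1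
    have hz3 := hz.1.2.1.2
    have hz4 := hz.1.2.2
    set Ann : Set (G →₀ R) := {u | P.mul z u = 0} with hAnnDef
    have hAnnIdeal : IsIdealWith P.mul Ann := by
      refine ⟨?_, ?_, ?_, ?_, ?_⟩
      · exact P.mul_zero' z
      · intro x y hx hy
        show P.mul z (x + y) = 0
        rw [P.mul_add', (hx : P.mul z x = 0), (hy : P.mul z y = 0), add_zero]
      · intro x hx
        show P.mul z (-x) = 0
        rw [P.mul_neg', (hx : P.mul z x = 0), neg_zero]
      · intro r x hx
        show P.mul z (P.mul r x) = 0
        rw [← P.nl_mul hz2 r x, hz1 r, P.nm_mul hz3 r x, (hx : P.mul z x = 0),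
          P.mul_zero']
      · intro x r hx
        show P.mul z (P.mul x r) = 0
        rw [← P.nl_mul hz2 x r, (hx : P.mul z x = 0), P.zero_mul']
    have hAnnInv : ∀ a b : G, ∀ u ∈ Ann, P.ext a b u ∈ Ann := by
      intro a b u hu
      have hu' : P.mul z u = 0 := hu
      show P.mul z (P.ext a b u) = 0
      rcases hlin with hR | hL
      · have h1 := hR a b u z hz
        rw [← hz1 u, hu', P.ext_zero] at h1
        rw [hz1 (P.ext a b u)]
        exact h1.symm
      · have h1 := hL a b z hz u
        rw [hu', P.ext_zero] at h1
        exact h1.symm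
    have hOneNot : P.one ∉ Ann := by
      intro hc
      exact hz0 (by rw [← P.mul_one' z]; exact hc)
    have hcancel : ∀ u, P.mul z u = 0 → u = 0 := by
      intro u hu
      rcases h Ann hAnnIdeal hAnnInv with hA | hA
      · have hmem : u ∈ Ann := hu
        rw [hA] at hmem
        exact hmem
      · exact absurd (by rw [hA]; trivial : P.one ∈ Ann) hOneNot
    have hzinj : ∀ u v, P.mul z u = P.mul z v → u = v := by
      intro u v huv
      have h0 := hcancel (u - v) (by rw [P.mul_sub', huv, sub_self])
      exact sub_eq_zero.mp h0
    set J : Set (G →₀ R) := Set.range (P.mul z) with hJDef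
    have hJIdeal : IsIdealWith P.mul J := by
      refine ⟨⟨0, P.mul_zero' z⟩, ?_, ?_, ?_, ?_⟩
      · rintro _ _ ⟨x, rfl⟩ ⟨y, rfl⟩
        exact ⟨x + y, P.mul_add' z x y⟩
      · rintro _ ⟨x, rfl⟩
        exact ⟨-x, P.mul_neg' z x⟩
      · rintro r _ ⟨x, rfl⟩
        refine ⟨P.mul r x, ?_⟩
        rw [← P.nl_mul hz2 r x, hz1 r, P.nm_mul hz3 r x]
      · rintro _ r ⟨x, rfl⟩
        exact ⟨P.mul x r, (P.nl_mul hz2 x r).symm⟩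
    have hJInv : ∀ a b : G, ∀ u ∈ J, P.ext a b u ∈ J := by
      rintro a b _ ⟨x, rfl⟩
      rcases hlin with hR | hL
      · refine ⟨P.ext a b x, ?_⟩
        have h1 := hR a b x z hz
        rw [← hz1 x] at h1
        rw [h1]
        exact hz1 (P.ext a b x)
      · exact ⟨P.ext a b x, (hL a b z hz x).symm⟩
    have hJuniv : J = Set.univ := by
      rcases h J hJIdeal hJInv with hA | hA
      · exfalso
        apply hz0
        have hmem : z ∈ J := ⟨P.one, P.mul_one' z⟩
        rw [hA] at hmem
        exact hmem
      · exact hA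
    obtain ⟨w, hw⟩ : P.one ∈ J := by rw [hJuniv]; trivial
    have hwz : P.mul w z = P.one := by
      apply sub_eq_zero.mp
      apply hcancel
      rw [P.mul_sub', ← P.nl_mul hz2 w z, hw, P.one_mul', P.mul_one']
      exact sub_self z
    have hwCS : ∀ v, P.mul w v = P.mul v w := by
      intro v
      apply hzinj
      calc P.mul z (P.mul w v) = P.mul (P.mul z w) v := (P.nl_mul hz2 w v).symm
        _ = P.mul P.one v := by rw [hw]
        _ = v := P.one_mul' v
        _ = P.mul v P.one := (P.mul_one' v).symm
        _ = P.mul v (P.mul z w) := by rw [hw]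
        _ = P.mul (P.mul v z) w := (P.nm_mul hz3 v w).symm
        _ = P.mul (P.mul z v) w := by rw [hz1 v]
        _ = P.mul z (P.mul v w) := P.nl_mul hz2 v w
    have hwNl : ∀ u v, P.mul (P.mul w u) v = P.mul w (P.mul u v) := by
      intro u v
      apply hzinj
      calc P.mul z (P.mul (P.mul w u) v)
          = P.mul (P.mul z (P.mul w u)) v := (P.nl_mul hz2 _ v).symm
        _ = P.mul (P.mul (P.mul z w) u) v := by rw [P.nl_mul hz2 w u]
        _ = P.mul (P.mul P.one u) v := by rw [hw]
        _ = P.mul u v := by rw [P.one_mul']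
        _ = P.mul P.one (P.mul u v) := (P.one_mul' _).symm
        _ = P.mul (P.mul z w) (P.mul u v) := by rw [hw]
        _ = P.mul z (P.mul w (P.mul u v)) := P.nl_mul hz2 w _
    have hwNm : ∀ u v, P.mul (P.mul u w) v = P.mul u (P.mul w v) := by
      intro u v
      apply hzinj
      calc P.mul z (P.mul (P.mul u w) v)
          = P.mul (P.mul z (P.mul u w)) v := (P.nl_mul hz2 _ _).symm
        _ = P.mul (P.mul (P.mul z u) w) v := by rw [P.nl_mul hz2 u w]
        _ = P.mul (P.mul (P.mul u z) w) v := by rw [hz1 u]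
        _ = P.mul (P.mul u (P.mul z w)) v := by rw [P.nm_mul hz3 u w]
        _ = P.mul (P.mul u P.one) v := by rw [hw]
        _ = P.mul u v := by rw [P.mul_one']
        _ = P.mul u (P.mul P.one v) := by rw [P.one_mul']
        _ = P.mul u (P.mul (P.mul z w) v) := by rw [hw]
        _ = P.mul u (P.mul z (P.mul w v)) := by rw [P.nl_mul hz2 w v]
        _ = P.mul (P.mul u z) (P.mul w v) := (P.nm_mul hz3 u _).symm
        _ = P.mul (P.mul z u) (P.mul w v) := by rw [hz1 u]
        _ = P.mul z (P.mul u (P.mul w v)) := P.nl_mul hz2 u _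
    have hwNr : ∀ u v, P.mul (P.mul u v) w = P.mul u (P.mul v w) := by
      intro u v
      apply hzinj
      calc P.mul z (P.mul (P.mul u v) w)
          = P.mul (P.mul (P.mul u v) w) z := hz1 _
        _ = P.mul (P.mul u v) (P.mul w z) := P.nr_mul hz4 _ w
        _ = P.mul (P.mul u v) P.one := by rw [hwz]
        _ = P.mul u v := P.mul_one' _
        _ = P.mul u (P.mul v P.one) := by rw [P.mul_one']
        _ = P.mul u (P.mul v (P.mul w z)) := by rw [hwz]
        _ = P.mul u (P.mul (P.mul v w) z) := by rw [P.nr_mul hz4 v w]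
        _ = P.mul (P.mul u (P.mul v w)) z := (P.nr_mul hz4 u _).symm
        _ = P.mul z (P.mul u (P.mul v w)) := (hz1 _).symm
    have hwext : ∀ a b : G, P.ext a b w = if a = b then w else 0 := by
      intro a b
      apply hzinj
      have key : P.mul z (P.ext a b w) = if a = b then P.one else 0 := by
        rcases hlin with hR | hL
        · have h1 := hR a b w z hz
          rw [hwz, P.ext_one, ← hz1 (P.ext a b w)] at h1
          exact h1.symm
        · have h1 := hL a b z hz w
          rw [hw, P.ext_one] at h1
          exact h1.symm
      rw [key]
      split_ifs with hab
      · exact hw.symm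
      · exact (P.mul_zero' z).symm
    exact ⟨w, ⟨⟨hwCS, ⟨fun u v => sub_eq_zero.mpr (hwNl u v),
      fun u v => sub_eq_zero.mpr (hwNm u v)⟩,
      fun u v => sub_eq_zero.mpr (hwNr u v)⟩, hwext⟩, hw, hwz⟩
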